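/- arXiv:2601.16554 — 2 statements merged into one kernel-verified Lean document; each statement's English description precedes it below -/
import Mathlib

section
/- For every λ > 0, the integral over [-π, π] of exp(−2λ sin²(t/2)) dt is at most (π/√(3λ))·(1 + √(π/2)). -/
open Real MeasureTheory

theorem stmt2 (l : ℝ) (hl : 0 < l) :
    (∫ t in (-Real.pi)..Real.pi, Real.exp (-2 * l * (Real.sin (t / 2)) ^ 2))
      ≤ Real.pi / Real.sqrt (3 * l) * (1 + Real.sqrt (Real.pi / 2)) := by
  have hpi := Real.pi_pos
  set c : ℝ := 2 * l / Real.pi ^ 2 with hc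
  have hcpos : 0 < c := by positivity
  set a : ℝ := Real.sqrt (Real.pi / 2) with ha
  have ha0 : 0 ≤ a := Real.sqrt_nonneg _
  have ha2 : a ^ 2 = Real.pi / 2 := Real.sq_sqrt (by positivity)
  -- Step 1 : pointwise bound on [-π, π]
  have key : ∀ t ∈ Set.Icc (-Real.pi) Real.pi,
      Real.exp (-2 * l * (Real.sin (t / 2)) ^ 2) ≤ Real.exp (-c * t ^ 2) := by
    intro t ht
    apply Real.exp_le_exp.mpr
    have h0 : Real.sin (|t| / 2) ^ 2 = Real.sin (t / 2) ^ 2 := by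
      rcases abs_cases t with ⟨h, _⟩ | ⟨h, _⟩ <;> rw [h]
      rw [neg_div, Real.sin_neg]; ring
    have hta : |t| ≤ Real.pi := abs_le.mpr ⟨ht.1, ht.2⟩
    have hj : |t| / Real.pi ≤ Real.sin (|t| / 2) := by
      simpa using Real.mul_le_sin (x := |t| / 2) (by positivity) (by linarith [abs_nonneg t])
    have h1 : (|t| / Real.pi) ^ 2 ≤ Real.sin (t / 2) ^ 2 := by
      rw [← h0]
      exact pow_le_pow_left₀ (by positivity) hj 2
    have h2 : t ^ 2 / Real.pi ^ 2 ≤ Real.sin (t / 2) ^ 2 := by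
      calc t ^ 2 / Real.pi ^ 2 = (|t| / Real.pi) ^ 2 := by
            rw [div_pow, sq_abs]
        _ ≤ _ := h1
    have h3 : (2 * l) * (t ^ 2 / Real.pi ^ 2) ≤ (2 * l) * Real.sin (t / 2) ^ 2 :=
      mul_le_mul_of_nonneg_left h2 (by positivity)
    have h4 : -c * t ^ 2 = -((2 * l) * (t ^ 2 / Real.pi ^ 2)) := by rw [hc]; ring
    rw [h4]
    linarith
  -- Step 2 : compare integrals on [-π, π]
  have hint1 : IntervalIntegrable (fun t => Real.exp (-2 * l * (Real.sin (t / 2)) ^ 2))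
      volume (-Real.pi) Real.pi := (by fun_prop : Continuous _).intervalIntegrable _ _
  have hint2 : IntervalIntegrable (fun t => Real.exp (-c * t ^ 2))
      volume (-Real.pi) Real.pi := (by fun_prop : Continuous _).intervalIntegrable _ _
  have step2 : (∫ t in (-Real.pi)..Real.pi, Real.exp (-2 * l * (Real.sin (t / 2)) ^ 2))
      ≤ ∫ t in (-Real.pi)..Real.pi, Real.exp (-c * t ^ 2) :=
    intervalIntegral.integral_mono_on (by linarith) hint1 hint2 key
  -- Step 3 : compare with the full Gaussian integral
  have step3 : (∫ t in (-Real.pi)..Real.pi, Real.exp (-c * t ^ 2))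
      ≤ ∫ t : ℝ, Real.exp (-c * t ^ 2) := by
    rw [intervalIntegral.integral_of_le (by linarith)]
    apply MeasureTheory.setIntegral_le_integral (integrable_exp_neg_mul_sq hcpos)
    filter_upwards with x using (Real.exp_pos _).le
  rw [integral_gaussian] at step3
  -- Step 4 : numerical estimate
  have hkey : Real.pi ≤ 1 + 2 * a := by
    nlinarith [ha2, ha0, Real.pi_gt_d6, Real.pi_lt_d2]
  have hR : 0 ≤ Real.pi / Real.sqrt (3 * l) * (1 + a) := by positivity
  have hRsq : (Real.pi / Real.sqrt (3 * l) * (1 + a)) ^ 2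
      = Real.pi ^ 2 / (3 * l) * (1 + a) ^ 2 := by
    rw [mul_pow, div_pow, Real.sq_sqrt (by positivity : (0:ℝ) ≤ 3 * l)]
  have hpc : Real.pi / c = Real.pi ^ 3 / (2 * l) := by
    rw [hc]; field_simp
  have hsq : Real.pi / c ≤ (Real.pi / Real.sqrt (3 * l) * (1 + a)) ^ 2 := by
    rw [hpc, hRsq, div_mul_eq_mul_div, div_le_div_iff₀ (by positivity) (by positivity)]
    have h5 : 3 * Real.pi ^ 3 ≤ 2 * Real.pi ^ 2 * (1 + a) ^ 2 := by
      nlinarith [mul_le_mul_of_nonneg_left hkey (by positivity : (0:ℝ) ≤ 2 * Real.pi ^ 2), ha2]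
    nlinarith [mul_le_mul_of_nonneg_right h5 hl.le]
  have step4 : Real.sqrt (Real.pi / c) ≤ Real.pi / Real.sqrt (3 * l) * (1 + a) := by
    calc Real.sqrt (Real.pi / c) ≤ Real.sqrt ((Real.pi / Real.sqrt (3 * l) * (1 + a)) ^ 2) :=
          Real.sqrt_le_sqrt hsq
      _ = _ := Real.sqrt_sq hR
  linarith
end

section
/- Bergström identity: Let F be a probability distribution on ℝ^d, D a finite signed measure with D{ℝ^d} = 1, n ∈ ℕ, and 0 ≤ k ≤ n−1. Then F^{*n} − ∑_{m=0}^{k} C(n,m)·D^{*(n−m)}*(F−D)^{*m} = ∑_{m=k+1}^{n} C(m−1,k)·F^{*(n−m)}*(F−D)^{*(k+1)}*D^{*(m−k−1)}, where all powers are convolution powers. -/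
open MeasureTheory

variable {G : Type*} [AddCommMonoid G] [MeasurableSpace G]

/-- Convolution of finite signed measures, via Jordan decomposition. -/
noncomputable def sconv (M V : SignedMeasure G) : SignedMeasure G :=
  ((M.toJordanDecomposition.posPart.conv V.toJordanDecomposition.posPart +
      M.toJordanDecomposition.negPart.conv V.toJordanDecomposition.negPart).toSignedMeasure) -
  ((M.toJordanDecomposition.posPart.conv V.toJordanDecomposition.negPart +
      M.toJordanDecomposition.negPart.conv V.toJordanDecomposition.posPart).toSignedMeasure)

/-- Dirac (point mass) as a signed measure. -/
noncomputable def diracSM (a : G) : SignedMeasure G := (Measure.dirac a).toSignedMeasure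

/-- Convolution powers, with the 0th power the point mass at 0. -/
noncomputable def convPow (M : SignedMeasure G) : ℕ → SignedMeasure G
  | 0 => diracSM 0
  | n + 1 => sconv (convPow M n) M

/-- Total variation norm. -/
noncomputable def tvnorm (M : SignedMeasure G) : ℝ := (M.totalVariation Set.univ).toReal

/-- Setwise sum of a family of signed measures (when it exists). -/
noncomputable def seriesSM {ι : Type*} (g : ι → SignedMeasure G) : SignedMeasure G := by
  classical
  exact if h : ∃ E : SignedMeasure G, ∀ A : Set G, MeasurableSet A → E A = ∑' i, g i A then
    h.choose else 0

/-- Exponential of a finite signed measure: `exp M = ∑ M^{*j}/j!`. -/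
noncomputable def expSM (M : SignedMeasure G) : SignedMeasure G :=
  seriesSM fun j : ℕ => ((Nat.factorial j : ℝ)⁻¹) • convPow M j

/-- Total variation distance. -/
noncomputable def tvdist (M V : SignedMeasure G) : ℝ := tvnorm (M - V) / 2

noncomputable def csm (P Q : Measure G) [IsFiniteMeasure P] [IsFiniteMeasure Q] :
    SignedMeasure G := (P.conv Q).toSignedMeasure

set_option linter.unusedSectionVars false

theorem csm_congr {P P' Q Q' : Measure G} [IsFiniteMeasure P] [IsFiniteMeasure P']
    [IsFiniteMeasure Q] [IsFiniteMeasure Q'] (h1 : P = P') (h2 : Q = Q') :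
    csm P Q = csm P' Q' := by subst h1; subst h2; rfl

section
variable [MeasurableAdd₂ G]

theorem convAssoc (μ ν ρ : Measure G) [SFinite μ] [SFinite ν] [SFinite ρ] :
    (μ.conv ν).conv ρ = μ.conv (ν.conv ρ) := by
  unfold Measure.conv
  have h1 : ((μ.prod ν).map (fun x : G × G => x.1 + x.2)).prod ρ
      = ((μ.prod ν).prod ρ).map (Prod.map (fun x : G × G => x.1 + x.2) id) := by
    conv_lhs => rw [← Measure.map_id (μ := ρ)]
    exact Measure.map_prod_map _ _ (by fun_prop) measurable_id
  have h2 : μ.prod ((ν.prod ρ).map (fun x : G × G => x.1 + x.2))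
      = (μ.prod (ν.prod ρ)).map (Prod.map id (fun x : G × G => x.1 + x.2)) := by
    conv_lhs => rw [← Measure.map_id (μ := μ)]
    exact Measure.map_prod_map _ _ measurable_id (by fun_prop)
  rw [h1, h2, ← Measure.prodAssoc_prod, Measure.map_map (by fun_prop) (by fun_prop),
    Measure.map_map (by fun_prop) (by fun_prop),
    Measure.map_map (by fun_prop) (by fun_prop)]
  congr 1
  ext ⟨⟨a, b⟩, c⟩
  exact add_assoc a b c

theorem csm_add_left (P P' Q : Measure G) [IsFiniteMeasure P] [IsFiniteMeasure P']
    [IsFiniteMeasure Q] : csm (P + P') Q = csm P Q + csm P' Q := by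
  unfold csm
  rw [← Measure.toSignedMeasure_add]
  exact Measure.toSignedMeasure_congr (Measure.add_conv P P' Q)

theorem csm_add_right (P Q Q' : Measure G) [IsFiniteMeasure P] [IsFiniteMeasure Q]
    [IsFiniteMeasure Q'] : csm P (Q + Q') = csm P Q + csm P Q' := by
  unfold csm
  rw [← Measure.toSignedMeasure_add]
  exact Measure.toSignedMeasure_congr (Measure.conv_add P Q Q')

theorem csm_comm (P Q : Measure G) [IsFiniteMeasure P] [IsFiniteMeasure Q] :
    csm P Q = csm Q P :=
  Measure.toSignedMeasure_congr (Measure.conv_comm P Q)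

theorem csm_assoc (P Q R : Measure G) [IsFiniteMeasure P] [IsFiniteMeasure Q]
    [IsFiniteMeasure R] : csm (P.conv Q) R = csm P (Q.conv R) :=
  Measure.toSignedMeasure_congr (convAssoc P Q R)

theorem csm_zero_left (Q : Measure G) [IsFiniteMeasure Q] : csm (0 : Measure G) Q = 0 := by
  unfold csm
  rw [Measure.toSignedMeasure_congr (Measure.zero_conv Q), Measure.toSignedMeasure_zero]

theorem csm_zero_right (Q : Measure G) [IsFiniteMeasure Q] : csm Q (0 : Measure G) = 0 := by
  unfold csm
  rw [Measure.toSignedMeasure_congr (Measure.conv_zero Q), Measure.toSignedMeasure_zero]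

theorem csm_dirac_right (Q : Measure G) [IsFiniteMeasure Q] :
    csm Q (Measure.dirac 0) = Q.toSignedMeasure :=
  Measure.toSignedMeasure_congr (Measure.conv_dirac_zero Q)

end

theorem tsm_cancel {P N P' N' : Measure G} [IsFiniteMeasure P] [IsFiniteMeasure N]
    [IsFiniteMeasure P'] [IsFiniteMeasure N']
    (h : P.toSignedMeasure - N.toSignedMeasure = P'.toSignedMeasure - N'.toSignedMeasure) :
    P + N' = P' + N := by
  rw [← Measure.toSignedMeasure_eq_toSignedMeasure_iff, Measure.toSignedMeasure_add,
    Measure.toSignedMeasure_add]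
  rw [sub_eq_sub_iff_add_eq_add] at h
  exact h

theorem jordan_rep (M : SignedMeasure G) :
    M = M.toJordanDecomposition.posPart.toSignedMeasure -
        M.toJordanDecomposition.negPart.toSignedMeasure :=
  (M.toSignedMeasure_toJordanDecomposition).symm

section
variable [MeasurableAdd₂ G]

theorem sconv_rep {M V : SignedMeasure G} (P N Q R : Measure G) [IsFiniteMeasure P]
    [IsFiniteMeasure N] [IsFiniteMeasure Q] [IsFiniteMeasure R]
    (hM : M = P.toSignedMeasure - N.toSignedMeasure)
    (hV : V = Q.toSignedMeasure - R.toSignedMeasure) :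
    sconv M V = (csm P Q + csm N R) - (csm P R + csm N Q) := by
  set A := M.toJordanDecomposition.posPart with hA
  set B := M.toJordanDecomposition.negPart with hB
  set C := V.toJordanDecomposition.posPart with hC
  set E := V.toJordanDecomposition.negPart with hE
  have h1 : A + N = P + B := tsm_cancel ((jordan_rep M).symm.trans hM)
  have h2 : C + R = Q + E := tsm_cancel ((jordan_rep V).symm.trans hV)
  have e2A : csm A C + csm A R = csm A Q + csm A E := by
    rw [← csm_add_right, ← csm_add_right]; exact csm_congr rfl h2
  have e2B : csm B C + csm B R = csm B Q + csm B E := by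
    rw [← csm_add_right, ← csm_add_right]; exact csm_congr rfl h2
  have e1Q : csm A Q + csm N Q = csm P Q + csm B Q := by
    rw [← csm_add_left, ← csm_add_left]; exact csm_congr h1 rfl
  have e1R : csm A R + csm N R = csm P R + csm B R := by
    rw [← csm_add_left, ← csm_add_left]; exact csm_congr h1 rfl
  have goal : (csm A C + csm B E) - (csm A E + csm B C)
      = (csm P Q + csm N R) - (csm P R + csm N Q) := by
    have hAC : csm A C = csm A Q + csm A E - csm A R := eq_sub_of_add_eq e2A
    have hBC : csm B C = csm B Q + csm B E - csm B R := eq_sub_of_add_eq e2B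
    have hPQ : csm P Q = csm A Q + csm N Q - csm B Q := eq_sub_of_add_eq e1Q.symm
    have hPR : csm P R = csm A R + csm N R - csm B R := eq_sub_of_add_eq e1R.symm
    rw [hAC, hBC, hPQ, hPR]
    abel
  show (A.conv C + B.conv E).toSignedMeasure - (A.conv E + B.conv C).toSignedMeasure = _
  rw [Measure.toSignedMeasure_add, Measure.toSignedMeasure_add]
  exact goal

/-- `sconv` in terms of the Jordan parts, restated via `csm`. -/
theorem sconv_def (M V : SignedMeasure G) :
    sconv M V = (csm M.toJordanDecomposition.posPart V.toJordanDecomposition.posPart +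
        csm M.toJordanDecomposition.negPart V.toJordanDecomposition.negPart) -
      (csm M.toJordanDecomposition.posPart V.toJordanDecomposition.negPart +
        csm M.toJordanDecomposition.negPart V.toJordanDecomposition.posPart) :=
  sconv_rep _ _ _ _ (jordan_rep M) (jordan_rep V)

theorem sconv_comm (M V : SignedMeasure G) : sconv M V = sconv V M := by
  rw [sconv_def, sconv_def]
  rw [csm_comm M.toJordanDecomposition.posPart, csm_comm M.toJordanDecomposition.negPart,
    csm_comm M.toJordanDecomposition.posPart V.toJordanDecomposition.negPart,
    csm_comm M.toJordanDecomposition.negPart V.toJordanDecomposition.posPart]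
  abel

theorem sconv_add_left (M M' V : SignedMeasure G) :
    sconv (M + M') V = sconv M V + sconv M' V := by
  set A := M.toJordanDecomposition.posPart
  set B := M.toJordanDecomposition.negPart
  set A' := M'.toJordanDecomposition.posPart
  set B' := M'.toJordanDecomposition.negPart
  set C := V.toJordanDecomposition.posPart
  set E := V.toJordanDecomposition.negPart
  have hMM' : M + M' = (A + A').toSignedMeasure - (B + B').toSignedMeasure := by
    rw [Measure.toSignedMeasure_add, Measure.toSignedMeasure_add]
    conv_lhs => rw [jordan_rep M, jordan_rep M']
    abel
  rw [sconv_rep (A + A') (B + B') C E hMM' (jordan_rep V), sconv_def M V, sconv_def M' V,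
    csm_add_left, csm_add_left, csm_add_left, csm_add_left]
  abel

theorem sconv_zero_left (V : SignedMeasure G) : sconv 0 V = 0 := by
  have h0 : (0 : SignedMeasure G)
      = (0 : Measure G).toSignedMeasure - (0 : Measure G).toSignedMeasure := by
    rw [Measure.toSignedMeasure_zero]; abel
  rw [sconv_rep 0 0 _ _ h0 (jordan_rep V), csm_zero_left, csm_zero_left]
  abel

theorem sconv_add_right (M V V' : SignedMeasure G) :
    sconv M (V + V') = sconv M V + sconv M V' := by
  rw [sconv_comm, sconv_add_left, sconv_comm V M, sconv_comm V' M]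

theorem sconv_zero_right (M : SignedMeasure G) : sconv M 0 = 0 := by
  rw [sconv_comm, sconv_zero_left]

theorem sconv_one_right (M : SignedMeasure G) : sconv M (diracSM 0) = M := by
  have h1 : diracSM 0 = (Measure.dirac (0 : G)).toSignedMeasure
      - (0 : Measure G).toSignedMeasure := by
    rw [Measure.toSignedMeasure_zero]; unfold diracSM; abel
  rw [sconv_rep _ _ (Measure.dirac 0) 0 (jordan_rep M) h1, csm_zero_right, csm_zero_right,
    csm_dirac_right, csm_dirac_right]
  conv_rhs => rw [jordan_rep M]
  abel

theorem sconv_one_left (M : SignedMeasure G) : sconv (diracSM 0) M = M := by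
  rw [sconv_comm, sconv_one_right]

theorem sconv_assoc (M V W : SignedMeasure G) :
    sconv (sconv M V) W = sconv M (sconv V W) := by
  set A := M.toJordanDecomposition.posPart
  set B := M.toJordanDecomposition.negPart
  set C := V.toJordanDecomposition.posPart
  set E := V.toJordanDecomposition.negPart
  set X := W.toJordanDecomposition.posPart
  set Y := W.toJordanDecomposition.negPart
  have hMV : sconv M V = (A.conv C + B.conv E).toSignedMeasure
      - (A.conv E + B.conv C).toSignedMeasure := rfl
  have hVW : sconv V W = (C.conv X + E.conv Y).toSignedMeasure
      - (C.conv Y + E.conv X).toSignedMeasure := rfl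
  rw [sconv_rep (A.conv C + B.conv E) (A.conv E + B.conv C) X Y hMV (jordan_rep W),
    sconv_rep A B (C.conv X + E.conv Y) (C.conv Y + E.conv X) (jordan_rep M) hVW,
    csm_add_left, csm_add_left, csm_add_left, csm_add_left,
    csm_add_right, csm_add_right, csm_add_right, csm_add_right,
    csm_assoc, csm_assoc, csm_assoc, csm_assoc, csm_assoc, csm_assoc, csm_assoc, csm_assoc]
  abel

noncomputable instance : CommRing (SignedMeasure G) where
  __ := (inferInstance : AddCommGroup (SignedMeasure G))
  mul := sconv
  one := diracSM 0
  mul_assoc := sconv_assoc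
  one_mul := sconv_one_left
  mul_one := sconv_one_right
  left_distrib := fun a b c => sconv_add_right a b c
  right_distrib := fun a b c => sconv_add_left a b c
  mul_comm := sconv_comm
  zero_mul := sconv_zero_left
  mul_zero := sconv_zero_right

end

section
variable [MeasurableAdd₂ G]

theorem convPow_eq_pow (M : SignedMeasure G) (n : ℕ) : convPow M n = M ^ n := by
  induction n with
  | zero => rfl
  | succ n IH =>
    show sconv (convPow M n) M = M ^ (n + 1)
    rw [IH, pow_succ]
    rfl

end

theorem bergstrom {R : Type*} [CommRing R] (f d : R) (n k : ℕ) (hk : k + 1 ≤ n) :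
    f ^ n - ∑ m ∈ Finset.range (k + 1), n.choose m • (d ^ (n - m) * (f - d) ^ m)
      = ∑ m ∈ Finset.Icc (k + 1) n, (m - 1).choose k •
          (f ^ (n - m) * (f - d) ^ (k + 1) * d ^ (m - k - 1)) := by
  induction k with
  | zero =>
    simp only [Finset.range_one, Finset.sum_singleton, Nat.choose_zero_right, pow_zero,
      mul_one, one_smul, Nat.sub_zero, zero_add, pow_one]
    rw [← geom_sum₂_mul f d n, Finset.sum_mul]
    refine (Finset.sum_nbij' (fun m => n - m) (fun i => n - i) ?_ ?_ ?_ ?_ ?_).symm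
    · intro m hm; simp only [Finset.mem_Icc] at hm; simp only [Finset.mem_range]; omega
    · intro i hi; simp only [Finset.mem_range] at hi; simp only [Finset.mem_Icc]; omega
    · intro m hm; simp only [Finset.mem_Icc] at hm; omega
    · intro i hi; simp only [Finset.mem_range] at hi; omega
    · intro m hm
      simp only [Finset.mem_Icc] at hm
      rw [show n - 1 - (n - m) = m - 1 by omega]
      ring
  | succ k IH =>
    have hk1 : k + 1 ≤ n := by omega
    rw [Finset.sum_range_succ, ← sub_sub, IH hk1]
    have hterm : ∀ m ∈ Finset.Icc (k + 1 + 1) n,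
        (m - 1).choose (k + 1) • (f ^ (n - m) * (f - d) ^ (k + 1 + 1) * d ^ (m - (k + 1) - 1))
          = (m - 1).choose (k + 1) •
              (f ^ (n - (m - 1)) * (f - d) ^ (k + 1) * d ^ ((m - 1) - k - 1))
            - (m - 1).choose (k + 1) •
              (f ^ (n - m) * (f - d) ^ (k + 1) * d ^ (m - k - 1)) := by
      intro m hm
      simp only [Finset.mem_Icc] at hm
      rw [← smul_sub]
      congr 1
      rw [show n - (m - 1) = (n - m) + 1 by omega, show m - 1 - k - 1 = m - (k + 1) - 1 by omega,
        show m - k - 1 = (m - (k + 1) - 1) + 1 by omega, pow_succ, pow_succ, pow_succ]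
      ring
    rw [Finset.sum_congr rfl hterm, Finset.sum_sub_distrib]
    have hmap : Finset.Icc (k + 1 + 1) n = (Finset.Icc (k + 1) (n - 1)).map
        (addRightEmbedding 1) := by
      rw [Finset.map_add_right_Icc]
      congr 1
      omega
    have hS1 : (∑ m ∈ Finset.Icc (k + 1 + 1) n, (m - 1).choose (k + 1) •
          (f ^ (n - (m - 1)) * (f - d) ^ (k + 1) * d ^ ((m - 1) - k - 1)))
        = ∑ m ∈ Finset.Icc (k + 1) (n - 1), m.choose (k + 1) •
          (f ^ (n - m) * (f - d) ^ (k + 1) * d ^ (m - k - 1)) := by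
      rw [hmap, Finset.sum_map]
      refine Finset.sum_congr rfl fun a ha => ?_
      simp only [Finset.mem_Icc] at ha
      simp only [addRightEmbedding_apply, Nat.add_sub_cancel]
    rw [hS1]
    have hS2 : (∑ m ∈ Finset.Icc (k + 1) n, m.choose (k + 1) •
          (f ^ (n - m) * (f - d) ^ (k + 1) * d ^ (m - k - 1)))
        = (∑ m ∈ Finset.Icc (k + 1) (n - 1), m.choose (k + 1) •
          (f ^ (n - m) * (f - d) ^ (k + 1) * d ^ (m - k - 1)))
          + n.choose (k + 1) • (f ^ (n - n) * (f - d) ^ (k + 1) * d ^ (n - k - 1)) := by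
      conv_lhs => rw [show n = (n - 1) + 1 by omega]
      rw [Finset.sum_Icc_succ_top (by omega)]
      rw [show n - 1 + 1 = n by omega]
    have hS3 : (∑ m ∈ Finset.Icc (k + 1) n, m.choose (k + 1) •
          (f ^ (n - m) * (f - d) ^ (k + 1) * d ^ (m - k - 1)))
        = (∑ m ∈ Finset.Icc (k + 1) n, (m - 1).choose k •
            (f ^ (n - m) * (f - d) ^ (k + 1) * d ^ (m - k - 1)))
          + ∑ m ∈ Finset.Icc (k + 1) n, (m - 1).choose (k + 1) •
            (f ^ (n - m) * (f - d) ^ (k + 1) * d ^ (m - k - 1)) := by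
      rw [← Finset.sum_add_distrib]
      refine Finset.sum_congr rfl fun m hm => ?_
      simp only [Finset.mem_Icc] at hm
      rw [← add_smul]
      congr 1
      rw [show m = (m - 1) + 1 by omega]
      simp only [Nat.add_sub_cancel]
      exact Nat.choose_succ_succ _ _
    have hS4 : (∑ m ∈ Finset.Icc (k + 1) n, (m - 1).choose (k + 1) •
          (f ^ (n - m) * (f - d) ^ (k + 1) * d ^ (m - k - 1)))
        = ∑ m ∈ Finset.Icc (k + 1 + 1) n, (m - 1).choose (k + 1) •
          (f ^ (n - m) * (f - d) ^ (k + 1) * d ^ (m - k - 1)) := by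
      rw [show Finset.Icc (k + 1) n = insert (k + 1) (Finset.Icc (k + 1 + 1) n) from by
          ext x; simp only [Finset.mem_Icc, Finset.mem_insert]; omega,
        Finset.sum_insert (by simp)]
      simp [Nat.choose_eq_zero_of_lt]
    have hfinal : n.choose (k + 1) • (d ^ (n - (k + 1)) * (f - d) ^ (k + 1))
        = n.choose (k + 1) • (f ^ (n - n) * (f - d) ^ (k + 1) * d ^ (n - k - 1)) := by
      congr 1
      rw [Nat.sub_self, pow_zero, one_mul, show n - (k + 1) = n - k - 1 by omega]
      ring
    rw [hfinal, ← hS4, eq_sub_of_add_eq hS2.symm, hS3]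
    abel

theorem stmt18 (d : ℕ) (μ : MeasureTheory.Measure (Fin d → ℝ))
    [MeasureTheory.IsProbabilityMeasure μ] (D : MeasureTheory.SignedMeasure (Fin d → ℝ))
    (hD : D Set.univ = 1) (n k : ℕ) (hk : k + 1 ≤ n) :
    convPow μ.toSignedMeasure n -
        ∑ m ∈ Finset.range (k + 1), (n.choose m : ℝ) •
          sconv (convPow D (n - m)) (convPow (μ.toSignedMeasure - D) m)
      = ∑ m ∈ Finset.Icc (k + 1) n, ((m - 1).choose k : ℝ) •
          sconv (sconv (convPow μ.toSignedMeasure (n - m))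
            (convPow (μ.toSignedMeasure - D) (k + 1))) (convPow D (m - k - 1)) := by
  have hmul : ∀ X Y : SignedMeasure (Fin d → ℝ), sconv X Y = X * Y := fun _ _ => rfl
  have key := bergstrom (R := SignedMeasure (Fin d → ℝ)) μ.toSignedMeasure D n k hk
  simp only [convPow_eq_pow, hmul, Nat.cast_smul_eq_nsmul]
  exact key
end
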